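/- Let β ∈ ℂ with |β| > 1 be an algebraic number and A ⊂ ℤ[β] a finite alphabet with 0 ∈ A. If ℕ ⊆ A[β], then every algebraic conjugate β' of β satisfies |β'| ≥ 1. -/

import Mathlib

noncomputable section

/-- `ℤ[β]`: the smallest subring of `ℂ` containing `β` (and hence `ℤ`). -/
def Zring (β : ℂ) : Subring ℂ := Subring.closure {β}

/-- `A[β]`: values of finite digit strings over `A` in nonnegative powers of `β`. -/
def Apoly (β : ℂ) (A : Set ℂ) : Set ℂ :=
  {x | ∃ (n : ℕ) (a : ℕ → ℂ), (∀ j, a j ∈ A) ∧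
    x = ∑ j ∈ Finset.range (n + 1), a j * β ^ j}

theorem stmt9 (β : ℂ) (hβ : 1 < ‖β‖) (hβalg : IsAlgebraic ℚ β)
    (A : Set ℂ) (hAfin : A.Finite)
    (h0 : (0 : ℂ) ∈ A) (hA : A ⊆ (Zring β : Set ℂ))
    (hN : ∀ n : ℕ, (n : ℂ) ∈ Apoly β A) :
    ∀ β' : ℂ, Polynomial.aeval β' (minpoly ℚ β) = 0 → 1 ≤ ‖β'‖ := by
  intro β' hroot
  by_contra hlt
  push_neg at hlt
  set c : ℝ := ‖β'‖ with hc
  have hc0 : 0 ≤ c := norm_nonneg _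
  have hint : IsIntegral ℚ β := hβalg.isIntegral
  haveI : Fact (Irreducible (minpoly ℚ β)) := ⟨minpoly.irreducible hint⟩
  set K := AdjoinRoot (minpoly ℚ β)
  have hβroot : (Polynomial.aeval β) (minpoly ℚ β) = 0 := minpoly.aeval ℚ β
  set φ : K →ₐ[ℚ] ℂ := AdjoinRoot.liftAlgHom (minpoly ℚ β) (Algebra.ofId ℚ ℂ) β hβroot
  set ψ : K →ₐ[ℚ] ℂ := AdjoinRoot.liftAlgHom (minpoly ℚ β) (Algebra.ofId ℚ ℂ) β' hroot
  have hφroot : φ (AdjoinRoot.root (minpoly ℚ β)) = β := AdjoinRoot.liftAlgHom_root _ _ _ hβroot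
  have hψroot : ψ (AdjoinRoot.root (minpoly ℚ β)) = β' := AdjoinRoot.liftAlgHom_root _ _ _ hroot
  have hφinj : Function.Injective φ := φ.toRingHom.injective
  -- Zring β ⊆ range φ
  have hrange : (Zring β : Set ℂ) ⊆ Set.range φ := by
    have : Subring.closure {β} ≤ φ.range.toSubring := by
      apply Subring.closure_le.mpr
      intro x hx
      rcases hx with rfl
      exact ⟨AdjoinRoot.root _, hφroot⟩
    intro x hx
    exact this hx
  -- choice of preimages
  have hg : ∀ x ∈ A, ∃ k : K, φ k = x := fun x hx => hrange (hA hx)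
  classical
  set g : ℂ → K := fun x => if h : ∃ k : K, φ k = x then h.choose else 0 with hgdef
  have hgspec : ∀ x ∈ A, φ (g x) = x := by
    intro x hx
    have h := hg x hx
    simp only [hgdef, dif_pos h]
    exact h.choose_spec
  -- bound M
  obtain ⟨M, hM⟩ : ∃ M : ℝ, ∀ x ∈ A, ‖ψ (g x)‖ ≤ M := by
    rcases (hAfin.image (fun x => ‖ψ (g x)‖)).bddAbove with ⟨M, hM⟩
    exact ⟨M, fun x hx => hM ⟨x, hx, rfl⟩⟩
  have hM0 : 0 ≤ M := le_trans (norm_nonneg _) (hM 0 h0)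
  -- geometric sum bound
  have hsum : ∀ m : ℕ, ∑ j ∈ Finset.range m, c ^ j ≤ (1 - c)⁻¹ := by
    intro m
    have hsummable : Summable (fun j : ℕ => c ^ j) := summable_geometric_of_lt_one hc0 hlt
    have := hsummable.sum_le_tsum (Finset.range m) (fun i _ => pow_nonneg hc0 i)
    rwa [tsum_geometric_of_lt_one hc0 hlt] at this
  -- each natural number is bounded
  have hbound : ∀ N : ℕ, (N : ℝ) ≤ M * (1 - c)⁻¹ := by
    intro N
    obtain ⟨n, a, haA, hsumeq⟩ := hN N
    set k : ℕ → K := fun j => g (a j)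
    have hinK : (N : K) = ∑ j ∈ Finset.range (n + 1), k j * (AdjoinRoot.root (minpoly ℚ β)) ^ j := by
      apply hφinj
      rw [map_natCast, map_sum]
      rw [hsumeq]
      refine Finset.sum_congr rfl fun j _ => ?_
      rw [map_mul, map_pow, hφroot, hgspec _ (haA j)]
    have hNC : (N : ℂ) = ∑ j ∈ Finset.range (n + 1), ψ (k j) * β' ^ j := by
      have := congrArg ψ hinK
      rw [map_natCast, map_sum] at this
      rw [this]
      refine Finset.sum_congr rfl fun j _ => ?_
      rw [map_mul, map_pow, hψroot]
    have : (N : ℝ) = ‖(N : ℂ)‖ := by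
      rw [Complex.norm_natCast]
    rw [this, hNC]
    calc ‖∑ j ∈ Finset.range (n + 1), ψ (k j) * β' ^ j‖
        ≤ ∑ j ∈ Finset.range (n + 1), ‖ψ (k j) * β' ^ j‖ :=
          norm_sum_le _ _
      _ ≤ ∑ j ∈ Finset.range (n + 1), M * c ^ j := by
          refine Finset.sum_le_sum fun j _ => ?_
          rw [norm_mul, norm_pow]
          exact mul_le_mul_of_nonneg_right (hM _ (haA j)) (pow_nonneg hc0 j)
      _ = M * ∑ j ∈ Finset.range (n + 1), c ^ j := by rw [Finset.mul_sum]
      _ ≤ M * (1 - c)⁻¹ := mul_le_mul_of_nonneg_left (hsum _) hM0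
  obtain ⟨N, hNgt⟩ := exists_nat_gt (M * (1 - c)⁻¹)
  exact absurd (hbound N) (not_le.mpr hNgt)
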